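/- arXiv:2110.13312 — 3 statements merged into one kernel-verified Lean document; each statement's English description precedes it below -/
import Mathlib

section
/- Let (X,d,μ) be an upper doubling metric measure space with dominating function λ satisfying λ(x,r) ≤ C̃ λ(y,r) whenever d(x,y) ≤ r. Then there exists a constant C > 0 such that for all balls B ⊂ R ⊂ Q, K_{B,Q} ≤ K_{B,R} + C · K_{R,Q}, where K_{B,Q} = 1 + Σ_{k=1}^{N_{B,Q}} μ(6^k B)/λ(x_B, 6^k r_B). -/
open MeasureTheory Metric
open scoped ENNReal NNReal

/-- `N_{B,Q}`: the smallest integer `n` with `6^n r_B ≥ r_Q`. -/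
noncomputable def NBQ (rB rQ : ℝ) : ℕ := sInf {n : ℕ | rQ ≤ 6 ^ n * rB}

lemma NBQ_spec {rB : ℝ} (hrB : 0 < rB) (rQ : ℝ) : rQ ≤ 6 ^ NBQ rB rQ * rB := by
  have hne : {n : ℕ | rQ ≤ 6 ^ n * rB}.Nonempty := by
    obtain ⟨n, hn⟩ := pow_unbounded_of_one_lt (rQ / rB) (by norm_num : (1:ℝ) < 6)
    exact ⟨n, le_of_lt (by rwa [div_lt_iff₀ hrB] at hn)⟩
  exact Nat.sInf_mem hne

lemma NBQ_le {rB rQ : ℝ} {n : ℕ} (h : rQ ≤ 6 ^ n * rB) : NBQ rB rQ ≤ n := Nat.sInf_le h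

lemma NBQ_lt {rB rQ : ℝ} {n : ℕ} (h : n < NBQ rB rQ) : 6 ^ n * rB < rQ := by
  by_contra hc
  exact absurd (NBQ_le (not_lt.mp hc)) (by omega)

lemma lam_pow_two {X : Type*} (lam : X → ℝ → ℝ) (Clam : ℝ) (hClam : 1 ≤ Clam)
    (hdoub : ∀ (x : X) (r : ℝ), 0 < r → lam x r ≤ Clam * lam x (r / 2))
    (x : X) (n : ℕ) {r : ℝ} (hr : 0 < r) : lam x (2 ^ n * r) ≤ Clam ^ n * lam x r := by
  induction n with
  | zero => simp
  | succ n ih =>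
    have h1 : lam x (2 ^ (n+1) * r) ≤ Clam * lam x (2 ^ n * r) := by
      have := hdoub x (2 ^ (n+1) * r) (by positivity)
      have he : 2 ^ (n+1) * r / 2 = 2 ^ n * r := by ring
      rwa [he] at this
    calc lam x (2 ^ (n+1) * r) ≤ Clam * lam x (2 ^ n * r) := h1
    _ ≤ Clam * (Clam ^ n * lam x r) := mul_le_mul_of_nonneg_left ih (by linarith)
    _ = Clam ^ (n+1) * lam x r := by ring


/-- The coefficient `K_{B,Q} = 1 + ∑_{k=1}^{N_{B,Q}} μ(6^k B)/λ(x_B, 6^k r_B)`. -/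
noncomputable def Kcoef {X : Type*} [MetricSpace X] [MeasurableSpace X]
    (μ : Measure X) (lam : X → ℝ → ℝ) (xB : X) (rB rQ : ℝ) : ℝ≥0∞ :=
  1 + ∑ k ∈ Finset.Icc 1 (NBQ rB rQ),
      μ (ball xB ((6 : ℝ) ^ k * rB)) / ENNReal.ofReal (lam xB ((6 : ℝ) ^ k * rB))

set_option maxHeartbeats 1000000 in
/-- For balls `B ⊂ R ⊂ Q`, `K_{B,Q} ≤ K_{B,R} + C K_{R,Q}`. -/
theorem Kcoef_triangle
    {X : Type*} [MetricSpace X] [MeasurableSpace X] (μ : Measure X)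
    (lam : X → ℝ → ℝ) (Clam Ct : ℝ) (hClam : 1 ≤ Clam)
    (hpos : ∀ (x : X) (r : ℝ), 0 < r → 0 < lam x r)
    (hmono : ∀ (x : X) (r s : ℝ), 0 < r → r ≤ s → lam x r ≤ lam x s)
    (hdom : ∀ (x : X) (r : ℝ), 0 < r → μ (ball x r) ≤ ENNReal.ofReal (lam x r))
    (hdoub : ∀ (x : X) (r : ℝ), 0 < r → lam x r ≤ Clam * lam x (r / 2))
    (hcomp : ∀ (x y : X) (r : ℝ), dist x y ≤ r → lam x r ≤ Ct * lam y r) :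
    ∃ C : ℝ≥0∞, 0 < C ∧ C < ⊤ ∧
      ∀ (xB xR xQ : X) (rB rR rQ : ℝ), 0 < rB → rB ≤ rR → rR ≤ rQ →
        ball xB rB ⊆ ball xR rR → ball xR rR ⊆ ball xQ rQ →
        Kcoef μ lam xB rB rQ ≤ Kcoef μ lam xB rB rR + C * Kcoef μ lam xR rR rQ := by
  by_cases hX : Nonempty X
  · obtain ⟨x0⟩ := hX
    have hCt : 1 ≤ Ct := by
      have h1 := hcomp x0 x0 1 (by simp)
      have h2 := hpos x0 1 one_pos
      nlinarith
    have hcc : (1:ℝ) ≤ Clam ^ 6 * Ct := by nlinarith [one_le_pow₀ hClam (n := 6)]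
    set c : ℝ≥0∞ := ENNReal.ofReal (Clam ^ 6 * Ct) with hc
    have hc0 : c ≠ 0 := by
      simp only [hc, ne_eq, ENNReal.ofReal_eq_zero, not_le]; linarith
    have hctop : c ≠ ⊤ := ENNReal.ofReal_ne_top
    refine ⟨c + 2, lt_of_lt_of_le (by norm_num) le_add_self, by finiteness, ?_⟩
    intro xB xR xQ rB rR rQ hrB hBR hRQ hsubBR hsubRQ
    have hrR : 0 < rR := lt_of_lt_of_le hrB hBR
    have hrQ : 0 < rQ := lt_of_lt_of_le hrR hRQ
    set N1 := NBQ rB rR with hN1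
    set N := NBQ rB rQ with hN
    set M := NBQ rR rQ with hM
    set t : ℕ → ℝ≥0∞ := fun k =>
      μ (ball xB ((6:ℝ) ^ k * rB)) / ENNReal.ofReal (lam xB ((6:ℝ) ^ k * rB)) with ht
    set s : ℕ → ℝ≥0∞ := fun j =>
      μ (ball xR ((6:ℝ) ^ j * rR)) / ENNReal.ofReal (lam xR ((6:ℝ) ^ j * rR)) with hs
    have hdistBR : dist xB xR < rR := hsubBR (mem_ball_self hrB)
    have hRN1 : rR ≤ 6 ^ N1 * rB := NBQ_spec hrB rR
    have hQM : rQ ≤ 6 ^ M * rR := NBQ_spec hrR rQ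
    -- N1 ≤ N
    have hN1N : N1 ≤ N := NBQ_le (le_trans hRQ (NBQ_spec hrB rQ))
    -- N ≤ N1 + M
    have hNle : N ≤ N1 + M := by
      refine NBQ_le ?_
      calc rQ ≤ 6 ^ M * rR := hQM
      _ ≤ 6 ^ M * (6 ^ N1 * rB) := by nlinarith [pow_pos (by norm_num : (0:ℝ) < 6) M]
      _ = 6 ^ (N1 + M) * rB := by rw [pow_add]; ring
    -- key per-term bound
    have key : ∀ k, N1 < k → t k ≤ c * s (k - N1 + 2) := by
      intro k hk
      set j := k - N1 + 2 with hj
      have hkN1 : rR ≤ 6 ^ k * rB := by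
        refine hRN1.trans ?_
        have : (6:ℝ) ^ N1 ≤ 6 ^ k := pow_le_pow_right₀ (by norm_num) (le_of_lt hk)
        nlinarith
      have h6kB : (6:ℝ) ^ k * rB ≤ 6 ^ (k - N1 + 1) * rR := by
        rcases Nat.eq_zero_or_pos N1 with h0 | h0
        · have hBReq : rB ≤ rR := hBR
          have : (6:ℝ) ^ k ≤ 6 ^ (k - N1 + 1) :=
            pow_le_pow_right₀ (by norm_num) (by omega)
          nlinarith [pow_pos (by norm_num : (0:ℝ) < 6) k]
        · have hlt : (6:ℝ) ^ (N1 - 1) * rB < rR := NBQ_lt (by omega)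
          have he : (6:ℝ) ^ k = 6 ^ (k - N1 + 1) * 6 ^ (N1 - 1) := by
            rw [← pow_add]; congr 1; omega
          calc (6:ℝ) ^ k * rB = 6 ^ (k - N1 + 1) * (6 ^ (N1 - 1) * rB) := by rw [he]; ring
          _ ≤ 6 ^ (k - N1 + 1) * rR := by
              nlinarith [pow_pos (by norm_num : (0:ℝ) < 6) (k - N1 + 1)]
      -- ball inclusion
      have hball : ball xB ((6:ℝ) ^ k * rB) ⊆ ball xR ((6:ℝ) ^ j * rR) := by
        intro y hy
        rw [mem_ball] at hy ⊢
        have h1 : dist y xR ≤ dist y xB + dist xB xR := dist_triangle y xB xR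
        have hrRle : rR ≤ (6:ℝ) ^ (k - N1 + 1) * rR := by
          nlinarith [one_le_pow₀ (by norm_num : (1:ℝ) ≤ 6) (n := k - N1 + 1)]
        have h2 : (6:ℝ) ^ j = 6 * 6 ^ (k - N1 + 1) := by
          rw [hj, show k - N1 + 2 = (k - N1 + 1) + 1 by omega, pow_succ]; ring
        nlinarith [pow_pos (by norm_num : (0:ℝ) < 6) (k - N1 + 1)]
      -- lambda comparison
      have hlam : lam xR ((6:ℝ) ^ j * rR) ≤ Clam ^ 6 * Ct * lam xB ((6:ℝ) ^ k * rB) := by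
        have hstep1 : (6:ℝ) ^ j * rR ≤ 2 ^ 6 * (6 ^ k * rB) := by
          have he : (6:ℝ) ^ j * 6 ^ N1 = 6 ^ (k + 2) := by
            rw [← pow_add]; congr 1; omega
          have h1 : (6:ℝ) ^ j * rR ≤ 6 ^ j * (6 ^ N1 * rB) := by
            nlinarith [pow_pos (by norm_num : (0:ℝ) < 6) j]
          have h2 : (6:ℝ) ^ j * (6 ^ N1 * rB) = 36 * (6 ^ k * rB) := by
            rw [show (6:ℝ) ^ j * (6 ^ N1 * rB) = (6 ^ j * 6 ^ N1) * rB by ring, he,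
              pow_add]; ring
          have h3 : (36:ℝ) * (6 ^ k * rB) ≤ 2 ^ 6 * (6 ^ k * rB) := by
            nlinarith [pow_pos (by norm_num : (0:ℝ) < 6) k]
          linarith
        have hm1 : lam xR ((6:ℝ) ^ j * rR) ≤ lam xR (2 ^ 6 * (6 ^ k * rB)) :=
          hmono _ _ _ (by positivity) hstep1
        have hm2 : lam xR (2 ^ 6 * ((6:ℝ) ^ k * rB)) ≤ Clam ^ 6 * lam xR (6 ^ k * rB) :=
          lam_pow_two lam Clam hClam hdoub xR 6 (by positivity)
        have hm3 : lam xR ((6:ℝ) ^ k * rB) ≤ Ct * lam xB (6 ^ k * rB) := by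
          refine hcomp xR xB _ ?_
          rw [dist_comm]
          linarith
        have hC6 : (0:ℝ) < Clam ^ 6 := by positivity
        nlinarith
      -- ENNReal computation
      set a := μ (ball xB ((6:ℝ) ^ k * rB))
      set a' := μ (ball xR ((6:ℝ) ^ j * rR))
      set d := ENNReal.ofReal (lam xB ((6:ℝ) ^ k * rB)) with hd
      set d' := ENNReal.ofReal (lam xR ((6:ℝ) ^ j * rR)) with hd'
      have haa : a ≤ a' := measure_mono hball
      have hdd : d' ≤ c * d := by
        rw [hd', hd, hc, ← ENNReal.ofReal_mul (by positivity)]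
        exact ENNReal.ofReal_le_ofReal hlam
      have hdne : d ≠ 0 := by
        simp only [hd, ne_eq, ENNReal.ofReal_eq_zero, not_le]
        exact hpos xB _ (by positivity)
      have hdtop : d ≠ ⊤ := ENNReal.ofReal_ne_top
      have hinv : d⁻¹ ≤ c * d'⁻¹ := by
        have h1 : (c * d)⁻¹ ≤ d'⁻¹ := ENNReal.inv_le_inv.mpr hdd
        have h2 : (c * d)⁻¹ = c⁻¹ * d⁻¹ := ENNReal.mul_inv (Or.inl hc0) (Or.inl hctop)
        calc d⁻¹ = c * (c⁻¹ * d⁻¹) := by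
              rw [← mul_assoc, ENNReal.mul_inv_cancel hc0 hctop, one_mul]
        _ = c * (c * d)⁻¹ := by rw [h2]
        _ ≤ c * d'⁻¹ := mul_le_mul_right h1 c
      calc t k = a * d⁻¹ := by rw [ht]; simp [div_eq_mul_inv]; rfl
      _ ≤ a' * (c * d'⁻¹) := mul_le_mul' haa hinv
      _ = c * (a' * d'⁻¹) := by ring
      _ = c * s j := by rw [hs]; simp [div_eq_mul_inv]; rfl
    -- terms are ≤ 1
    have tle1 : ∀ k : ℕ, t k ≤ 1 := by
      intro k
      rw [ht]
      exact ENNReal.div_le_of_le_mul (by simpa using hdom xB ((6:ℝ) ^ k * rB) (by positivity))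
    -- sum splitting
    rw [Kcoef, Kcoef, Kcoef, ← hN1, ← hN, ← hM, ← ht, ← hs]
    have hsplit : ∑ k ∈ Finset.Icc 1 N, t k
        = ∑ k ∈ Finset.Icc 1 N1, t k + ∑ k ∈ Finset.Ioc N1 N, t k := by
      rw [show Finset.Icc 1 N = Finset.Ioc 0 N by ext; simp; omega,
        show Finset.Icc 1 N1 = Finset.Ioc 0 N1 by ext; simp; omega]
      exact (Finset.sum_Ioc_consecutive _ (Nat.zero_le _) hN1N).symm
    have hbound : ∑ k ∈ Finset.Ioc N1 N, t k
        ≤ c * ∑ j ∈ Finset.Icc 1 M, s j + 2 := by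
      have hsub : Finset.Ioc N1 N ⊆ Finset.Ioc N1 (N1 + M) := by
        intro k hk; simp only [Finset.mem_Ioc] at *; omega
      have h1 : ∑ k ∈ Finset.Ioc N1 N, t k ≤ ∑ k ∈ Finset.Ioc N1 (N1 + M), t k :=
        Finset.sum_le_sum_of_subset hsub
      have h2 : ∑ k ∈ Finset.Ioc N1 (N1 + M), t k
          = ∑ k ∈ Finset.Ioc N1 (N1 + (M - 2)), t k
            + ∑ k ∈ Finset.Ioc (N1 + (M - 2)) (N1 + M), t k :=
        (Finset.sum_Ioc_consecutive _ (by omega) (by omega)).symm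
      have h3 : ∑ k ∈ Finset.Ioc N1 (N1 + (M - 2)), t k
          ≤ c * ∑ j ∈ Finset.Icc 1 M, s j := by
        calc ∑ k ∈ Finset.Ioc N1 (N1 + (M - 2)), t k
            ≤ ∑ k ∈ Finset.Ioc N1 (N1 + (M - 2)), c * s (k - N1 + 2) := by
              refine Finset.sum_le_sum ?_
              intro k hk
              simp only [Finset.mem_Ioc] at hk
              exact key k hk.1
        _ = c * ∑ k ∈ Finset.Ioc N1 (N1 + (M - 2)), s (k - N1 + 2) := by
              rw [Finset.mul_sum]
        _ = c * ∑ j ∈ (Finset.Ioc N1 (N1 + (M - 2))).image (fun k => k - N1 + 2), s j := by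
              rw [Finset.sum_image]
              intro a ha b hb hab
              simp only [Finset.mem_coe, Finset.mem_Ioc] at ha hb hab
              omega
        _ ≤ c * ∑ j ∈ Finset.Icc 1 M, s j := by
              refine mul_le_mul_right (Finset.sum_le_sum_of_subset ?_) c
              intro j hj
              simp only [Finset.mem_image, Finset.mem_Ioc, Finset.mem_Icc] at hj ⊢
              obtain ⟨k, hk, rfl⟩ := hj
              omega
      have h4 : ∑ k ∈ Finset.Ioc (N1 + (M - 2)) (N1 + M), t k ≤ 2 := by
        calc ∑ k ∈ Finset.Ioc (N1 + (M - 2)) (N1 + M), t k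
            ≤ ∑ _k ∈ Finset.Ioc (N1 + (M - 2)) (N1 + M), (1:ℝ≥0∞) :=
              Finset.sum_le_sum fun k _ => tle1 k
        _ = (Finset.Ioc (N1 + (M - 2)) (N1 + M)).card := by simp
        _ ≤ 2 := by
              rw [Nat.card_Ioc]
              norm_cast
              omega
      calc ∑ k ∈ Finset.Ioc N1 N, t k ≤ _ := h1
      _ = _ := h2
      _ ≤ c * ∑ j ∈ Finset.Icc 1 M, s j + 2 := add_le_add h3 h4
    calc 1 + ∑ k ∈ Finset.Icc 1 N, t k
        = (1 + ∑ k ∈ Finset.Icc 1 N1, t k) + ∑ k ∈ Finset.Ioc N1 N, t k := by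
          rw [hsplit]; ring
    _ ≤ (1 + ∑ k ∈ Finset.Icc 1 N1, t k) + (c * ∑ j ∈ Finset.Icc 1 M, s j + 2) :=
          add_le_add_right hbound _
    _ ≤ (1 + ∑ k ∈ Finset.Icc 1 N1, t k)
          + (c + 2) * (1 + ∑ j ∈ Finset.Icc 1 M, s j) := by
          refine add_le_add_right ?_ _
          have e : (c + 2) * (1 + ∑ j ∈ Finset.Icc 1 M, s j)
              = c * ∑ j ∈ Finset.Icc 1 M, s j + 2
                + (c + 2 * ∑ j ∈ Finset.Icc 1 M, s j) := by ring
          rw [e]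
          exact le_add_right le_rfl
  · exact ⟨1, one_pos, ENNReal.one_lt_top, fun xB _ _ _ _ _ _ _ _ _ _ => absurd ⟨xB⟩ hX⟩
end

section
/- Let (X,d,μ) be an upper doubling space with dominating function λ and constant C_λ, and let β₀ > C_λ^{log₂ 6}. Then for μ-almost every x ∈ X (indeed for every x with λ(x,r) > 0 for all r) and every r > 0, there exist arbitrarily large k ∈ ℕ such that the ball 6^k B(x,r) is (6,β₀)-doubling, i.e., μ(6^{k+1} B(x,r)) ≤ β₀ μ(6^k B(x,r)), provided μ(B(x,r)) > 0. -/
open MeasureTheory Metric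
open scoped ENNReal NNReal

/-- In an upper doubling space, for every `x` where the dominating function is positive
(and every ball around `x` has positive measure), there exist arbitrarily large `k`
such that `6^k B(x,r)` is `(6,β₀)`-doubling, provided `β₀ > C_λ^{log₂ 6}`. -/
theorem exists_large_doubling_balls
    {X : Type*} [MetricSpace X] [MeasurableSpace X] (μ : Measure X)
    (lam : X → ℝ → ℝ) (Clam : ℝ) (hClam : 1 ≤ Clam)
    (hmono : ∀ (x : X) (r s : ℝ), 0 < r → r ≤ s → lam x r ≤ lam x s)
    (hdom : ∀ (x : X) (r : ℝ), 0 < r → μ (ball x r) ≤ ENNReal.ofReal (lam x r))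
    (hdoub : ∀ (x : X) (r : ℝ), 0 < r → lam x r ≤ Clam * lam x (r / 2))
    (β₀ : ℝ≥0∞) (hβ₀ : ENNReal.ofReal Clam ^ Real.logb 2 6 < β₀) :
    ∀ (x : X) (r : ℝ), 0 < r → (∀ ρ : ℝ, 0 < ρ → 0 < lam x ρ) →
      0 < μ (ball x r) →
      ∀ n : ℕ, ∃ k : ℕ, n ≤ k ∧
        μ (ball x ((6 : ℝ) ^ (k + 1) * r)) ≤ β₀ * μ (ball x ((6 : ℝ) ^ k * r)) := by
  intro x r hr hlampos hμpos n
  by_contra hcon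
  push_neg at hcon
  have hC0 : (0:ℝ) < Clam := lt_of_lt_of_le one_pos hClam
  set s : ℝ := (6:ℝ) ^ n * r with hs_def
  have hs : 0 < s := mul_pos (pow_pos (by norm_num) n) hr
  set a : ℝ≥0∞ := μ (ball x s) with ha_def
  have ha : 0 < a := by
    refine lt_of_lt_of_le hμpos (measure_mono (ball_subset_ball ?_))
    nlinarith [one_le_pow₀ (show (1:ℝ) ≤ 6 by norm_num) (n := n), hr.le]
  set L : ℝ := lam x s with hL_def
  have hL : 0 < L := hlampos s hs
  -- lower bound by induction
  have hlow : ∀ m : ℕ, a * β₀ ^ m ≤ μ (ball x ((6:ℝ) ^ (n + m) * r)) := by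
    intro m
    induction m with
    | zero => simp [ha_def, hs_def]
    | succ m ih =>
        have h1 := (hcon (n + m) (Nat.le_add_right n m)).le
        calc a * β₀ ^ (m + 1) = β₀ * (a * β₀ ^ m) := by ring
          _ ≤ β₀ * μ (ball x ((6:ℝ) ^ (n + m) * r)) := mul_le_mul_right ih _
          _ ≤ μ (ball x ((6:ℝ) ^ ((n + m) + 1) * r)) := h1
          _ = μ (ball x ((6:ℝ) ^ (n + (m + 1)) * r)) := by ring_nf
  -- dominating function doubling iterated
  have hlam2 : ∀ (j : ℕ) (t : ℝ), 0 < t → lam x ((2:ℝ) ^ j * t) ≤ Clam ^ j * lam x t := by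
    intro j t ht
    induction j with
    | zero => simp
    | succ j ih =>
        have h2 : (0:ℝ) < (2:ℝ) ^ (j + 1) * t := by positivity
        have h3 := hdoub x ((2:ℝ) ^ (j + 1) * t) h2
        have h4 : (2:ℝ) ^ (j + 1) * t / 2 = (2:ℝ) ^ j * t := by ring
        rw [h4] at h3
        calc lam x ((2:ℝ) ^ (j+1) * t) ≤ Clam * lam x ((2:ℝ) ^ j * t) := h3
          _ ≤ Clam * (Clam ^ j * lam x t) := by
              exact mul_le_mul_of_nonneg_left ih hC0.le
          _ = Clam ^ (j + 1) * lam x t := by ring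
  set B : ℝ := Clam ^ Real.logb 2 6 with hB_def
  have hB0 : (0:ℝ) < B := Real.rpow_pos_of_pos hC0 _
  have hB1 : (1:ℝ) ≤ B := by
    have h0 : (0:ℝ) ≤ Real.logb 2 6 := (Real.logb_pos (by norm_num) (by norm_num)).le
    calc (1:ℝ) = Clam ^ (0:ℝ) := (Real.rpow_zero Clam).symm
      _ ≤ Clam ^ Real.logb 2 6 := Real.rpow_le_rpow_of_exponent_le hClam h0
  -- upper bound
  have hupper : ∀ m : ℕ, μ (ball x ((6:ℝ) ^ (n + m) * r))
      ≤ ENNReal.ofReal (Clam * L) * (ENNReal.ofReal B) ^ m := by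
    intro m
    set j : ℕ := ⌈(m : ℝ) * Real.logb 2 6⌉₊ with hj_def
    have hlogb : (0:ℝ) < Real.logb 2 6 := Real.logb_pos (by norm_num) (by norm_num)
    have h6 : (6:ℝ) ^ m ≤ (2:ℝ) ^ j := by
      have h26 : (2:ℝ) ^ (Real.logb 2 6) = 6 :=
        Real.rpow_logb (by norm_num) (by norm_num) (by norm_num)
      calc (6:ℝ) ^ m = ((2:ℝ) ^ (Real.logb 2 6)) ^ m := by rw [h26]
        _ = (2:ℝ) ^ ((Real.logb 2 6) * m) := by
            rw [← Real.rpow_natCast ((2:ℝ) ^ (Real.logb 2 6)) m, ← Real.rpow_mul (by norm_num)]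
        _ ≤ (2:ℝ) ^ ((j:ℝ)) := by
            apply Real.rpow_le_rpow_of_exponent_le (by norm_num)
            rw [mul_comm]; exact Nat.le_ceil _
        _ = (2:ℝ) ^ j := Real.rpow_natCast 2 j
    have hmul : (6:ℝ) ^ (n + m) * r = (6:ℝ) ^ m * s := by
      rw [hs_def]; ring
    have hCj : Clam ^ j ≤ Clam * B ^ m := by
      have hjle : (j : ℝ) ≤ (m : ℝ) * Real.logb 2 6 + 1 :=
        (Nat.ceil_lt_add_one (by positivity)).le
      calc Clam ^ j = Clam ^ ((j:ℝ)) := (Real.rpow_natCast Clam j).symm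
        _ ≤ Clam ^ ((m : ℝ) * Real.logb 2 6 + 1) :=
            Real.rpow_le_rpow_of_exponent_le hClam hjle
        _ = Clam ^ ((m : ℝ) * Real.logb 2 6) * Clam := by
            rw [Real.rpow_add hC0, Real.rpow_one]
        _ = Clam * B ^ m := by
            rw [mul_comm ((m:ℝ)) (Real.logb 2 6), Real.rpow_mul hC0.le, Real.rpow_natCast]
            ring
    have hlamle : lam x ((6:ℝ) ^ (n + m) * r) ≤ Clam * B ^ m * L := by
      rw [hmul]
      calc lam x ((6:ℝ) ^ m * s) ≤ lam x ((2:ℝ) ^ j * s) := by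
            apply hmono _ _ _ (by positivity)
            exact mul_le_mul_of_nonneg_right h6 hs.le
        _ ≤ Clam ^ j * L := hlam2 j s hs
        _ ≤ Clam * B ^ m * L := mul_le_mul_of_nonneg_right hCj hL.le
    calc μ (ball x ((6:ℝ) ^ (n + m) * r)) ≤ ENNReal.ofReal (lam x ((6:ℝ) ^ (n + m) * r)) :=
          hdom x _ (by positivity)
      _ ≤ ENNReal.ofReal (Clam * B ^ m * L) := ENNReal.ofReal_le_ofReal hlamle
      _ = ENNReal.ofReal (Clam * L) * (ENNReal.ofReal B) ^ m := by
          rw [show Clam * B ^ m * L = (Clam * L) * B ^ m by ring,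
            ENNReal.ofReal_mul (by positivity), ENNReal.ofReal_pow hB0.le]
  set A : ℝ≥0∞ := ENNReal.ofReal B with hA_def
  set K : ℝ≥0∞ := ENNReal.ofReal (Clam * L) with hK_def
  have key : ∀ m : ℕ, a * β₀ ^ m ≤ K * A ^ m := fun m => (hlow m).trans (hupper m)
  have hAβ : A < β₀ := by
    have : A = ENNReal.ofReal Clam ^ Real.logb 2 6 := by
      rw [hA_def, hB_def, ← ENNReal.ofReal_rpow_of_pos hC0]
    rwa [this]
  have hKtop : K ≠ ⊤ := ENNReal.ofReal_ne_top
  have hAtop : A ≠ ⊤ := ENNReal.ofReal_ne_top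
  rcases eq_or_ne β₀ ⊤ with hβtop | hβtop
  · have h1 := key 1
    rw [hβtop] at h1
    simp only [pow_one] at h1
    have : a * ⊤ = ⊤ := ENNReal.mul_top ha.ne'
    rw [this] at h1
    exact (ENNReal.mul_ne_top hKtop hAtop) (top_le_iff.mp h1)
  · have hβ0 : β₀ ≠ 0 := by
      intro h; rw [h] at hAβ; exact (not_lt_of_ge (zero_le (a := A))) hAβ
    have key2 : ∀ m : ℕ, a ≤ K * (A * β₀⁻¹) ^ m := by
      intro m
      have hβm0 : β₀ ^ m ≠ 0 := pow_ne_zero m hβ0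
      have hβmtop : β₀ ^ m ≠ ⊤ := ENNReal.pow_ne_top hβtop
      have := mul_le_mul_left (key m) (β₀ ^ m)⁻¹
      rw [mul_assoc, ENNReal.mul_inv_cancel hβm0 hβmtop, mul_one] at this
      calc a ≤ K * A ^ m * (β₀ ^ m)⁻¹ := this
        _ = K * (A * β₀⁻¹) ^ m := by
            rw [mul_pow, ENNReal.inv_pow, mul_assoc]
    have h1 : A * β₀⁻¹ < 1 := by
      have hi0 : β₀⁻¹ ≠ 0 := ENNReal.inv_ne_zero.mpr hβtop
      have hitop : β₀⁻¹ ≠ ⊤ := ENNReal.inv_ne_top.mpr hβ0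
      have := (ENNReal.mul_lt_mul_iff_left hi0 hitop).mpr hAβ
      rwa [ENNReal.mul_inv_cancel hβ0 hβtop] at this
    have htend : Filter.Tendsto (fun m : ℕ => K * (A * β₀⁻¹) ^ m) Filter.atTop (nhds 0) := by
      have h2 := ENNReal.tendsto_pow_atTop_nhds_zero_of_lt_one h1
      have h3 := ENNReal.Tendsto.const_mul h2 (Or.inr hKtop)
      simpa using h3
    obtain ⟨m, hm⟩ := (htend.eventually_lt_const ha).exists
    exact absurd (key2 m) (not_le_of_gt hm)
end

section
/- Let (X,d,μ) be a geometrically doubling metric measure space and ρ ≥ 5. Define M_{(ρ)} f(x) = sup_{B ∋ x} μ(ρB)^{-1} ∫_B |f| dμ (supremum over all balls containing x). Then M_{(ρ)} is bounded on L^p(μ) for every p ∈ (1,∞], and is of weak type (1,1). -/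
open MeasureTheory Metric Set
open scoped ENNReal NNReal

set_option linter.unusedSectionVars false
set_option maxHeartbeats 1000000





section NM
variable {X : Type*} [MetricSpace X] [MeasurableSpace X] [BorelSpace X]

/-- Generalized maximal operator acting on `ℝ≥0∞`-valued functions. -/
noncomputable def NM (μ : Measure X) (ρ : ℝ) (h : X → ℝ≥0∞) (x : X) : ℝ≥0∞ :=
  ⨆ (c : X) (r : ℝ) (_ : 0 < r) (_ : x ∈ ball c r),
    (μ (ball c (ρ * r)))⁻¹ * ∫⁻ y in ball c r, h y ∂μ

variable {μ : Measure X} {ρ : ℝ} {h h₁ : X → ℝ≥0∞}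

lemma NM_lt_iff {x : X} {a : ℝ≥0∞} :
    a < NM μ ρ h x ↔ ∃ c : X, ∃ r : ℝ, 0 < r ∧ x ∈ ball c r ∧
      a < (μ (ball c (ρ * r)))⁻¹ * ∫⁻ y in ball c r, h y ∂μ := by
  simp only [NM, lt_iSup_iff]
  constructor
  · rintro ⟨c, r, h1, h2, h3⟩; exact ⟨c, r, h1, h2, h3⟩
  · rintro ⟨c, r, h1, h2, h3⟩; exact ⟨c, r, h1, h2, h3⟩

lemma le_NM {x c : X} {r : ℝ} (hr : 0 < r) (hx : x ∈ ball c r) :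
    (μ (ball c (ρ * r)))⁻¹ * ∫⁻ y in ball c r, h y ∂μ ≤ NM μ ρ h x := by
  exact le_iSup_of_le c <| le_iSup_of_le r <| le_iSup_of_le hr <| le_iSup_of_le hx le_rfl

lemma ennr_inv_mul_le_one {a b : ℝ≥0∞} (hab : b ≤ a) : a⁻¹ * b ≤ 1 := by
  calc a⁻¹ * b ≤ a⁻¹ * a := by gcongr
  _ = a / a := by rw [div_eq_mul_inv, mul_comm]
  _ ≤ 1 := ENNReal.div_self_le_one

lemma ball_subset_dilate (hρ : 1 ≤ ρ) (c : X) {r : ℝ} (hr : 0 < r) :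
    ball c r ⊆ ball c (ρ * r) :=
  ball_subset_ball (by nlinarith)

lemma NM_le_of_le {s : ℝ≥0∞} (hle : ∀ y, h y ≤ h₁ y + s) (hρ : 1 ≤ ρ) (x : X) :
    NM μ ρ h x ≤ NM μ ρ h₁ x + s := by
  refine iSup₂_le fun c r => iSup₂_le fun hr hx => ?_
  have hBB : μ (ball c r) ≤ μ (ball c (ρ * r)) := measure_mono (ball_subset_dilate hρ c hr)
  calc (μ (ball c (ρ * r)))⁻¹ * ∫⁻ y in ball c r, h y ∂μ
      ≤ (μ (ball c (ρ * r)))⁻¹ * ∫⁻ y in ball c r, (h₁ y + s) ∂μ :=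
        mul_le_mul_right (lintegral_mono fun y => hle y) _
    _ = (μ (ball c (ρ * r)))⁻¹ * ((∫⁻ y in ball c r, h₁ y ∂μ) + s * μ (ball c r)) := by
        rw [lintegral_add_right _ measurable_const, lintegral_const,
          Measure.restrict_apply MeasurableSet.univ, univ_inter, mul_comm s]
    _ = (μ (ball c (ρ * r)))⁻¹ * (∫⁻ y in ball c r, h₁ y ∂μ)
        + s * ((μ (ball c (ρ * r)))⁻¹ * μ (ball c r)) := by ring
    _ ≤ NM μ ρ h₁ x + s * 1 := by
        gcongr
        · exact le_NM hr hx
        · exact ennr_inv_mul_le_one hBB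

    _ = NM μ ρ h₁ x + s := by rw [mul_one]

lemma NM_le_essSup (hρ : 1 ≤ ρ) (x : X) : NM μ ρ h x ≤ essSup h μ := by
  refine iSup₂_le fun c r => iSup₂_le fun hr hx => ?_
  have hBB : μ (ball c r) ≤ μ (ball c (ρ * r)) := measure_mono (ball_subset_dilate hρ c hr)
  calc (μ (ball c (ρ * r)))⁻¹ * ∫⁻ y in ball c r, h y ∂μ
      ≤ (μ (ball c (ρ * r)))⁻¹ * ∫⁻ _ in ball c r, essSup h μ ∂μ := by
        exact mul_le_mul_right (lintegral_mono_ae (ae_restrict_of_ae (ae_le_essSup (f := h)))) _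
    _ = (μ (ball c (ρ * r)))⁻¹ * (essSup h μ * μ (ball c r)) := by
        rw [setLIntegral_const]
    _ = essSup h μ * ((μ (ball c (ρ * r)))⁻¹ * μ (ball c r)) := by ring
    _ ≤ essSup h μ * 1 := mul_le_mul_right (ennr_inv_mul_le_one hBB) _
    _ = essSup h μ := mul_one _

lemma isOpen_NM_gt (a : ℝ≥0∞) : IsOpen {x : X | a < NM μ ρ h x} := by
  rw [isOpen_iff_mem_nhds]
  intro x hx
  obtain ⟨c, r, hr, hxball, hlt⟩ := NM_lt_iff.1 hx
  refine Filter.mem_of_superset (isOpen_ball.mem_nhds hxball) ?_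
  intro z hz
  exact NM_lt_iff.2 ⟨c, r, hr, hz, hlt⟩

lemma measurable_NM : Measurable (NM μ ρ h) := by
  apply measurable_of_Ioi
  intro a
  exact (isOpen_NM_gt a).measurableSet

end NM

section Sep
variable {X : Type*} [MetricSpace X]

lemma geom_iter (N₀ : ℕ)
    (hgeom : ∀ (x : X) (r : ℝ), ∃ s : Finset X,
      s.card ≤ N₀ ∧ ball x r ⊆ ⋃ y ∈ s, ball y (r / 2))
    (x : X) (r : ℝ) (k : ℕ) :
    ∃ s : Finset X, ball x r ⊆ ⋃ y ∈ s, ball y (r / 2 ^ k) := by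
  induction k with
  | zero => exact ⟨{x}, by simp⟩
  | succ k ih =>
    classical
    obtain ⟨s, hs⟩ := ih
    choose t _ ht using fun y : X => hgeom y (r / 2 ^ k)
    refine ⟨s.biUnion t, ?_⟩
    intro z hz
    obtain ⟨y, hy, hzy⟩ := by simpa using hs hz
    obtain ⟨w, hw, hzw⟩ := by simpa using ht y hzy
    have : r / 2 ^ k / 2 = r / 2 ^ (k + 1) := by ring
    rw [this] at hzw
    simp only [mem_iUnion, Finset.mem_biUnion]
    exact ⟨w, ⟨y, hy, hw⟩, hzw⟩

lemma totallyBounded_ball_of_geom (N₀ : ℕ)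
    (hgeom : ∀ (x : X) (r : ℝ), ∃ s : Finset X,
      s.card ≤ N₀ ∧ ball x r ⊆ ⋃ y ∈ s, ball y (r / 2))
    (x : X) (r : ℝ) : TotallyBounded (ball x r) := by
  rcases le_or_gt r 0 with hr | hr
  · rw [ball_eq_empty.2 hr]; exact totallyBounded_empty
  rw [totallyBounded_iff]
  intro ε hε
  obtain ⟨k, hk⟩ : ∃ k : ℕ, r / 2 ^ k < ε := by
    obtain ⟨k, hk⟩ := pow_unbounded_of_one_lt (r / ε) (one_lt_two (α := ℝ))
    exact ⟨k, by rw [div_lt_iff₀ (by positivity)]; rw [div_lt_iff₀ hε] at hk; linarith⟩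
  obtain ⟨s, hs⟩ := geom_iter N₀ hgeom x r k
  exact ⟨s, s.finite_toSet, hs.trans (iUnion₂_mono fun y _ => ball_subset_ball hk.le)⟩

lemma separable_of_geom (N₀ : ℕ)
    (hgeom : ∀ (x : X) (r : ℝ), ∃ s : Finset X,
      s.card ≤ N₀ ∧ ball x r ⊆ ⋃ y ∈ s, ball y (r / 2)) :
    TopologicalSpace.SeparableSpace X := by
  rcases isEmpty_or_nonempty X with hX | hX
  · infer_instance
  obtain ⟨x₀⟩ := hX
  rw [← TopologicalSpace.isSeparable_univ_iff]
  have : (univ : Set X) = ⋃ n : ℕ, ball x₀ n := by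
    ext z
    simp only [mem_univ, mem_iUnion, mem_ball, true_iff]
    obtain ⟨n, hn⟩ := exists_nat_gt (dist z x₀)
    exact ⟨n, hn⟩
  rw [this]
  exact TopologicalSpace.IsSeparable.iUnion fun n =>
    (totallyBounded_ball_of_geom N₀ hgeom x₀ n).isSeparable

end Sep

section Weak
variable {X : Type*} [MetricSpace X] [MeasurableSpace X] [BorelSpace X]
variable {μ : Measure X} {ρ : ℝ} {h : X → ℝ≥0∞}

lemma mul_meas_le_of_lt_inv_mul {T a I : ℝ≥0∞} (hlt : T < a⁻¹ * I) : T * a ≤ I := by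
  rcases eq_or_ne a 0 with rfl | ha0
  · simp
  rcases eq_or_ne a ⊤ with rfl | hatop
  · rw [ENNReal.inv_top, zero_mul] at hlt
    exact absurd hlt (not_lt_of_ge (zero_le))
  calc T * a ≤ a⁻¹ * I * a := mul_le_mul_left hlt.le a
    _ = I * (a⁻¹ * a) := by ring
    _ = I := by rw [ENNReal.inv_mul_cancel ha0 hatop, mul_one]

lemma weak_NM [TopologicalSpace.SeparableSpace X] (hρ : 5 ≤ ρ) (T : ℝ≥0∞) :
    T * μ {x | T < NM μ ρ h x} ≤ ∫⁻ y, h y ∂μ := by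
  rcases eq_or_ne T 0 with rfl | hT0
  · simp
  set E : ℕ → Set X := fun n => {x | ∃ c : X, ∃ r : ℝ, 0 < r ∧ r ≤ n ∧ x ∈ ball c r ∧
    T < (μ (ball c (ρ * r)))⁻¹ * ∫⁻ y in ball c r, h y ∂μ} with hE
  have hEunion : {x | T < NM μ ρ h x} = ⋃ n, E n := by
    ext x
    simp only [mem_setOf_eq, mem_iUnion, NM_lt_iff, hE]
    constructor
    · rintro ⟨c, r, hr, hx, hlt⟩
      exact ⟨⌈r⌉₊, c, r, hr, Nat.le_ceil r, hx, hlt⟩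
    · rintro ⟨n, c, r, hr, _, hx, hlt⟩
      exact ⟨c, r, hr, hx, hlt⟩
  have hmono : Monotone E := by
    intro m n hmn x hx
    obtain ⟨c, r, hr, hrm, hx, hlt⟩ := hx
    exact ⟨c, r, hr, hrm.trans (Nat.cast_le.2 hmn), hx, hlt⟩
  have key : ∀ n : ℕ, T * μ (E n) ≤ ∫⁻ y, h y ∂μ := by
    intro n
    classical
    have hch : ∀ x ∈ E n, ∃ c : X, ∃ r : ℝ, 0 < r ∧ r ≤ n ∧ x ∈ ball c r ∧
        T < (μ (ball c (ρ * r)))⁻¹ * ∫⁻ y in ball c r, h y ∂μ := fun x hx => hx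
    choose! c rad h1 h2 h3 h4 using hch
    obtain ⟨u, hut, hdisj, hcov⟩ :=
      Vitali.exists_disjoint_subfamily_covering_enlargement_closedBall (E n) c rad n
        (fun a ha => h2 a ha) 4 (by norm_num)
    have hballdisj : u.PairwiseDisjoint fun b => ball (c b) (rad b) :=
      hdisj.mono fun b => ball_subset_closedBall
    have hcount : u.Countable := by
      refine hballdisj.countable_of_isOpen (fun b _ => isOpen_ball) fun b hb => ?_
      exact ⟨c b, mem_ball_self (h1 b (hut hb))⟩
    have hcover : E n ⊆ ⋃ b ∈ u, ball (c b) (ρ * rad b) := by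
      intro x hx
      obtain ⟨b, hb, hsub⟩ := hcov x hx
      have hrb : 0 < rad b := h1 b (hut hb)
      have : closedBall (c b) (4 * rad b) ⊆ ball (c b) (ρ * rad b) := by
        intro z hz
        rw [mem_closedBall] at hz
        rw [mem_ball]
        nlinarith [hz]
      refine mem_biUnion hb (this (hsub ?_))
      exact ball_subset_closedBall (h3 x hx)
    haveI := hcount.to_subtype
    calc T * μ (E n) ≤ T * μ (⋃ b ∈ u, ball (c b) (ρ * rad b)) := mul_le_mul_right (measure_mono hcover) T
      _ ≤ T * ∑' b : u, μ (ball (c b) (ρ * rad b)) := mul_le_mul_right (measure_biUnion_le μ hcount _) T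
      _ = ∑' b : u, T * μ (ball (c b) (ρ * rad b)) := ENNReal.tsum_mul_left.symm
      _ ≤ ∑' b : u, ∫⁻ y in ball (c b) (rad b), h y ∂μ := by
          refine ENNReal.tsum_le_tsum fun b => ?_
          exact mul_meas_le_of_lt_inv_mul (h4 b (hut b.2))
      _ = ∫⁻ y in ⋃ b : u, ball (c b) (rad b), h y ∂μ := by
          rw [Measure.restrict_iUnion ?_ fun b => measurableSet_ball, lintegral_sum_measure]
          intro i j hij
          exact hballdisj i.2 j.2 (Subtype.coe_injective.ne hij)
      _ ≤ ∫⁻ y, h y ∂μ := lintegral_mono' Measure.restrict_le_self le_rfl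
  rw [hEunion, hmono.directed_le.measure_iUnion, ENNReal.mul_iSup]
  exact iSup_le key

end Weak
section Helpers

lemma tr_ne_zero (a : ℝ) : (2:ℝ≥0∞) ^ a ≠ 0 :=
  (ENNReal.rpow_pos (by norm_num) (by norm_num)).ne'

lemma tr_ne_top (a : ℝ) : (2:ℝ≥0∞) ^ a ≠ ⊤ := by
  rcases le_or_gt 0 a with ha | ha
  · exact ENNReal.rpow_ne_top_of_nonneg ha (by norm_num)
  · refine (lt_of_le_of_lt (ENNReal.rpow_le_rpow_of_exponent_le one_le_two ha.le) ?_).ne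
    rw [ENNReal.rpow_zero]
    exact ENNReal.one_lt_top

lemma tr_add (a b : ℝ) : (2:ℝ≥0∞) ^ (a + b) = 2 ^ a * 2 ^ b :=
  ENNReal.rpow_add a b (by norm_num) (by norm_num)

lemma tr_mono {a b : ℝ} (h : a ≤ b) : (2:ℝ≥0∞) ^ a ≤ 2 ^ b :=
  ENNReal.rpow_le_rpow_of_exponent_le one_le_two h

lemma tr_lt {a b : ℝ} (h : a < b) : (2:ℝ≥0∞) ^ a < 2 ^ b :=
  ENNReal.rpow_lt_rpow_of_exponent_lt (by norm_num) (ENNReal.ofNat_ne_top (n := 2)) h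

lemma tr_double (a : ℝ) : (2:ℝ≥0∞) ^ a + 2 ^ a = 2 ^ (a + 1) := by
  rw [tr_add a 1, ENNReal.rpow_one, ← mul_two]

lemma tsum_lintegral_le {α ι : Type*} [MeasurableSpace α] (μ : Measure α) (F : ι → α → ℝ≥0∞) :
    ∑' i, ∫⁻ y, F i y ∂μ ≤ ∫⁻ y, ∑' i, F i y ∂μ := by
  rw [ENNReal.tsum_eq_iSup_sum]
  refine iSup_le fun s => ?_
  have h1 : ∑ i ∈ s, ∫⁻ y, F i y ∂μ ≤ ∫⁻ y, ∑ i ∈ s, F i y ∂μ := by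
    classical
    induction s using Finset.induction with
    | empty => simp
    | @insert a s hnot ih =>
      rw [Finset.sum_insert hnot]
      simp_rw [Finset.sum_insert hnot]
      exact le_trans (add_le_add_right ih _) (le_lintegral_add _ _)
  exact h1.trans (lintegral_mono fun y => ENNReal.sum_le_tsum s)

lemma geom_sum_bound {p : ℝ} (hp : 1 < p) (x : ℝ≥0∞) (hx : x ≠ ⊤) :
    ∑' n : ℤ, ((2:ℝ≥0∞) ^ ((n:ℝ) + 1)) ^ p * ((2:ℝ≥0∞) ^ ((n:ℝ) - 2))⁻¹ *
      (if (2:ℝ≥0∞) ^ ((n:ℝ) - 1) < x then x else 0)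
      ≤ (1 - (2:ℝ≥0∞) ^ (1 - p))⁻¹ * (2:ℝ≥0∞) ^ (2 * p + 1) * x ^ p := by
  rcases eq_or_ne x 0 with rfl | hx0
  · simp
  obtain ⟨n₁, hn1, hn2⟩ := ENNReal.exists_mem_Ico_zpow hx0 hx (by norm_num) (ENNReal.ofNat_ne_top (n := 2))
  set n₀ : ℤ := n₁ + 1 with hn₀
  have coefeq : ∀ n : ℤ, ((2:ℝ≥0∞) ^ ((n:ℝ) + 1)) ^ p * ((2:ℝ≥0∞) ^ ((n:ℝ) - 2))⁻¹
      = 2 ^ (((n:ℝ) + 1) * p - ((n:ℝ) - 2)) := by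
    intro n
    rw [← ENNReal.rpow_mul, ← ENNReal.rpow_neg, sub_eq_add_neg (((n:ℝ)+1)*p), tr_add]
  have hterm : ∀ n : ℤ,
      ((2:ℝ≥0∞) ^ ((n:ℝ) + 1)) ^ p * ((2:ℝ≥0∞) ^ ((n:ℝ) - 2))⁻¹ *
        (if (2:ℝ≥0∞) ^ ((n:ℝ) - 1) < x then x else 0)
      ≤ (if n ≤ n₀ then (2:ℝ≥0∞) ^ (((n:ℝ) + 1) * p - ((n:ℝ) - 2)) * x else 0) := by
    intro n
    by_cases hc : (2:ℝ≥0∞) ^ ((n:ℝ) - 1) < x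
    · rw [if_pos hc, coefeq]
      have hn : n ≤ n₀ := by
        by_contra hgt
        push_neg at hgt
        have h1 : ((n₁:ℝ) + 1) ≤ (n:ℝ) - 1 := by
          have h' : n₁ + 2 ≤ n := by omega
          have h'' : ((n₁ + 2 : ℤ) : ℝ) ≤ ((n : ℤ) : ℝ) := by exact_mod_cast h'
          push_cast at h''
          linarith
        have h2 : x < (2:ℝ≥0∞) ^ ((n₁:ℝ) + 1) := by
          have := hn2
          rw [show ((2:ℝ≥0∞) ^ (n₁ + 1 : ℤ)) = 2 ^ (((n₁ + 1 : ℤ)):ℝ) from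
            (ENNReal.rpow_intCast 2 (n₁+1)).symm] at this
          push_cast at this
          exact this
        exact absurd ((h2.trans_le (tr_mono h1)).trans hc) (lt_irrefl x)
      rw [if_pos hn]
    · rw [if_neg hc, mul_zero]
      exact zero_le
  refine le_trans (ENNReal.tsum_le_tsum hterm) ?_
  -- reindex over ℕ
  set F : ℤ → ℝ≥0∞ :=
    fun n => (if n ≤ n₀ then (2:ℝ≥0∞) ^ (((n:ℝ) + 1) * p - ((n:ℝ) - 2)) * x else 0) with hF
  have hre : ∑' n : ℤ, F n = ∑' j : ℕ, F (n₀ - j) := by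
    refine tsum_eq_tsum_of_ne_zero_bij (fun j => n₀ - ((j : ℕ) : ℤ)) ?_ ?_ ?_
    · intro a b hab
      have h1 : n₀ - ((a : ℕ) : ℤ) = n₀ - ((b : ℕ) : ℤ) := hab
      have h2 : ((a : ℕ) : ℤ) = ((b : ℕ) : ℤ) := by omega
      exact Subtype.ext (by exact_mod_cast h2)
    · intro n hn
      have hnle : n ≤ n₀ := by
        by_contra hgt
        apply hn
        simp [hF, if_neg hgt]
      refine ⟨⟨(n₀ - n).toNat, ?_⟩, ?_⟩
      · show F (n₀ - (((n₀ - n).toNat : ℕ) : ℤ)) ≠ 0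
        rw [show n₀ - (((n₀ - n).toNat : ℕ) : ℤ) = n by omega]
        exact hn
      · show n₀ - (((n₀ - n).toNat : ℕ) : ℤ) = n
        omega
    · intro j
      rfl
  rw [hre]
  have hj : ∀ j : ℕ, F (n₀ - j) = (2:ℝ≥0∞) ^ (((n₀:ℝ) + 1) * p - ((n₀:ℝ) - 2)) *
      ((2:ℝ≥0∞) ^ (1 - p)) ^ (j : ℕ) * x := by
    intro j
    have hle : n₀ - (j:ℤ) ≤ n₀ := by omega
    rw [hF]
    simp only [if_pos hle]
    have hcast : (((n₀ - (j:ℤ)):ℤ):ℝ) = (n₀:ℝ) - (j:ℕ) := by push_cast; ring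
    rw [hcast]
    have hexp : ((n₀:ℝ) - j + 1) * p - ((n₀:ℝ) - j - 2)
        = (((n₀:ℝ) + 1) * p - ((n₀:ℝ) - 2)) + (1 - p) * (j:ℝ) := by ring
    rw [hexp, tr_add, ENNReal.rpow_mul, ENNReal.rpow_natCast]
  calc ∑' j : ℕ, F (n₀ - j)
      = (2:ℝ≥0∞) ^ (((n₀:ℝ) + 1) * p - ((n₀:ℝ) - 2)) * x * ∑' j : ℕ, ((2:ℝ≥0∞) ^ (1 - p)) ^ j := by
        rw [← ENNReal.tsum_mul_left]
        congr 1
        funext j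
        rw [hj j]
        ring
    _ = (2:ℝ≥0∞) ^ (((n₀:ℝ) + 1) * p - ((n₀:ℝ) - 2)) * x * (1 - (2:ℝ≥0∞) ^ (1 - p))⁻¹ := by
        rw [ENNReal.tsum_geometric]
    _ ≤ ((2:ℝ≥0∞) ^ (2 * p + 1) * x ^ (p - 1)) * x * (1 - (2:ℝ≥0∞) ^ (1 - p))⁻¹ := by
        refine mul_le_mul_left (mul_le_mul_left ?_ x) _
        -- 2 ^ ((n₀+1)p - (n₀-2)) ≤ 2^(2p+1) * x^(p-1)
        have h2n₀ : (2:ℝ≥0∞) ^ ((n₀:ℝ)) ≤ 2 * x := by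
          have : (2:ℝ≥0∞) ^ ((n₁:ℝ)) ≤ x := by
            rw [show ((2:ℝ≥0∞) ^ ((n₁:ℝ))) = 2 ^ (n₁:ℤ) from ENNReal.rpow_intCast 2 n₁]
            exact hn1
          calc (2:ℝ≥0∞) ^ ((n₀:ℝ)) = 2 ^ ((1:ℝ) + (n₁:ℝ)) := by
                rw [hn₀]; push_cast; ring_nf
            _ = 2 ^ (1:ℝ) * 2 ^ ((n₁:ℝ)) := tr_add 1 _
            _ ≤ 2 * x := by rw [ENNReal.rpow_one]; exact mul_le_mul_right this 2
        have hexp : ((n₀:ℝ) + 1) * p - ((n₀:ℝ) - 2) = (n₀:ℝ) * (p - 1) + (p + 2) := by ring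
        rw [hexp, tr_add, ENNReal.rpow_mul]
        calc ((2:ℝ≥0∞) ^ ((n₀:ℝ))) ^ (p-1) * 2 ^ (p+2)
            ≤ (2 * x) ^ (p-1) * 2 ^ (p+2) :=
              mul_le_mul_left (ENNReal.rpow_le_rpow h2n₀ (by linarith)) _
          _ = 2 ^ (p-1) * x ^ (p-1) * 2 ^ (p+2) := by
              rw [ENNReal.mul_rpow_of_nonneg _ _ (by linarith : (0:ℝ) ≤ p - 1)]
          _ = (2 ^ (p-1) * 2 ^ (p+2)) * x ^ (p-1) := by ring
          _ = 2 ^ (2*p+1) * x ^ (p-1) := by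
              rw [← tr_add]
              ring_nf
    _ = (1 - (2:ℝ≥0∞) ^ (1 - p))⁻¹ * (2:ℝ≥0∞) ^ (2 * p + 1) * (x ^ (p-1) * x) := by ring
    _ = (1 - (2:ℝ≥0∞) ^ (1 - p))⁻¹ * (2:ℝ≥0∞) ^ (2 * p + 1) * x ^ p := by
        congr 1
        nth_rewrite 2 [← ENNReal.rpow_one x]
        rw [← ENNReal.rpow_add _ _ hx0 hx]
        norm_num

end Helpers

section LpMain
variable {X : Type*} [MetricSpace X] [MeasurableSpace X] [BorelSpace X]
variable {μ : Measure X} {ρ : ℝ}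

lemma lp_NM [TopologicalSpace.SeparableSpace X] (hρ : 5 ≤ ρ) {p : ℝ} (hp : 1 < p)
    (h : X → ℝ≥0∞) (hfin : ∀ y, h y ≠ ⊤) :
    ∫⁻ x, NM μ ρ h x ^ p ∂μ ≤
      ((1 - (2:ℝ≥0∞) ^ (1 - p))⁻¹ * (2:ℝ≥0∞) ^ (2 * p + 1)) * ∫⁻ y, h y ^ p ∂μ := by
  have hρ1 : (1:ℝ) ≤ ρ := by linarith
  have hp0 : (0:ℝ) < p := by linarith
  set K : ℝ≥0∞ := (1 - (2:ℝ≥0∞) ^ (1 - p))⁻¹ * (2:ℝ≥0∞) ^ (2 * p + 1) with hK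
  have hq1 : (2:ℝ≥0∞) ^ (1 - p) < 1 := by
    have h1 : (2:ℝ≥0∞) ^ (1 - p) < 2 ^ (0:ℝ) := tr_lt (by linarith)
    rwa [ENNReal.rpow_zero] at h1
  have hqne : (1:ℝ≥0∞) - 2 ^ (1 - p) ≠ 0 := by
    rw [Ne, tsub_eq_zero_iff_le]
    exact not_le_of_gt hq1
  have hKne0 : K ≠ 0 := by
    refine mul_ne_zero ?_ (tr_ne_zero _)
    exact ENNReal.inv_ne_zero.2 (ne_top_of_le_ne_top ENNReal.one_ne_top tsub_le_self)
  have hKnetop : K ≠ ⊤ :=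
    ENNReal.mul_ne_top (ENNReal.inv_ne_top.2 hqne) (tr_ne_top _)
  set g := NM μ ρ h with hg
  set A := ∫⁻ y, h y ^ p ∂μ with hA
  rcases eq_or_ne A ⊤ with hAtop | hAtop
  · rw [hAtop, ENNReal.mul_top hKne0]
    exact le_top
  -- truncation
  set trunc : ℝ≥0∞ → X → ℝ≥0∞ := fun s y => if s < h y then h y else 0 with htr
  have htrunc_le : ∀ s y, h y ≤ trunc s y + s := by
    intro s y
    by_cases hc : s < h y
    · simp only [htr, if_pos hc]
      exact le_self_add
    · simp only [htr, if_neg hc]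
      rw [zero_add]
      exact not_lt.1 hc
  have htrunc_bound : ∀ (s : ℝ≥0∞), s ≠ 0 → ∀ y, trunc s y ≤ s ^ (1-p) * h y ^ p := by
    intro s hs0 y
    by_cases hc : s < h y
    · simp only [htr, if_pos hc]
      have hy0 : h y ≠ 0 := by
        intro h0
        rw [h0] at hc
        exact (not_le_of_gt hc) zero_le
      have e1 : h y = h y ^ (1-p) * h y ^ p := by
        rw [← ENNReal.rpow_add _ _ hy0 (hfin y)]
        norm_num
      nth_rewrite 1 [e1]
      refine mul_le_mul_left ?_ _
      rw [show (1-p) = -(p-1) by ring, ENNReal.rpow_neg, ENNReal.rpow_neg]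
      exact ENNReal.inv_le_inv.2 (ENNReal.rpow_le_rpow hc.le (by linarith))
    · simp only [htr, if_neg hc]
      exact zero_le
  -- key measure bound
  have hkey : ∀ n : ℤ, μ {x | (2:ℝ≥0∞) ^ ((n:ℝ)) ≤ g x}
      ≤ ((2:ℝ≥0∞) ^ ((n:ℝ) - 2))⁻¹ * ∫⁻ y, trunc ((2:ℝ≥0∞) ^ ((n:ℝ) - 1)) y ∂μ := by
    intro n
    have hsub : {x | (2:ℝ≥0∞) ^ ((n:ℝ)) ≤ g x} ⊆
        {x | (2:ℝ≥0∞) ^ ((n:ℝ) - 2) < NM μ ρ (trunc ((2:ℝ≥0∞) ^ ((n:ℝ) - 1))) x} := by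
      intro x hx
      have h1 : g x ≤ NM μ ρ (trunc ((2:ℝ≥0∞) ^ ((n:ℝ) - 1))) x + 2 ^ ((n:ℝ) - 1) :=
        NM_le_of_le (htrunc_le _) hρ1 x
      have h2 : (2:ℝ≥0∞) ^ ((n:ℝ) - 1) ≤ NM μ ρ (trunc ((2:ℝ≥0∞) ^ ((n:ℝ) - 1))) x := by
        refine (ENNReal.add_le_add_iff_right (tr_ne_top ((n:ℝ) - 1))).1 ?_
        calc (2:ℝ≥0∞) ^ ((n:ℝ) - 1) + 2 ^ ((n:ℝ) - 1)
            = 2 ^ (((n:ℝ) - 1) + 1) := tr_double _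
          _ = 2 ^ ((n:ℝ)) := by rw [sub_add_cancel]
          _ ≤ g x := hx
          _ ≤ _ := h1
      exact lt_of_lt_of_le (tr_lt (by linarith)) h2
    calc μ {x | (2:ℝ≥0∞) ^ ((n:ℝ)) ≤ g x}
        ≤ μ {x | (2:ℝ≥0∞) ^ ((n:ℝ) - 2) < NM μ ρ (trunc ((2:ℝ≥0∞) ^ ((n:ℝ) - 1))) x} :=
          measure_mono hsub
      _ = ((2:ℝ≥0∞) ^ ((n:ℝ) - 2))⁻¹ * ((2:ℝ≥0∞) ^ ((n:ℝ) - 2) *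
            μ {x | (2:ℝ≥0∞) ^ ((n:ℝ) - 2) < NM μ ρ (trunc ((2:ℝ≥0∞) ^ ((n:ℝ) - 1))) x}) := by
          rw [← mul_assoc, ENNReal.inv_mul_cancel (tr_ne_zero _) (tr_ne_top _), one_mul]
      _ ≤ ((2:ℝ≥0∞) ^ ((n:ℝ) - 2))⁻¹ * ∫⁻ y, trunc ((2:ℝ≥0∞) ^ ((n:ℝ) - 1)) y ∂μ :=
          mul_le_mul_right
            (weak_NM (μ := μ) (h := trunc ((2:ℝ≥0∞) ^ ((n:ℝ) - 1))) hρ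
              ((2:ℝ≥0∞) ^ ((n:ℝ) - 2))) _
  have hmg : Measurable g := measurable_NM
  have h3 : ∀ a : ℝ, ∫⁻ y, trunc ((2:ℝ≥0∞) ^ a) y ∂μ ≤ 2 ^ (a * (1-p)) * A := by
    intro a
    calc ∫⁻ y, trunc ((2:ℝ≥0∞) ^ a) y ∂μ
        ≤ ∫⁻ y, 2 ^ (a * (1-p)) * h y ^ p ∂μ := by
          refine lintegral_mono fun y => ?_
          have := htrunc_bound ((2:ℝ≥0∞) ^ a) (tr_ne_zero a) y
          rwa [← ENNReal.rpow_mul] at this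
      _ = _ := lintegral_const_mul' _ _ (tr_ne_top _)
  -- the measure of {g = ⊤} vanishes
  have htop : μ {x | g x = ⊤} = 0 := by
    have hb : ∀ k : ℕ, μ {x | g x = ⊤} * 2 ^ ((k:ℝ)) ≤ 2 ^ (1 + p) * A := by
      intro k
      have h1 : {x | g x = ⊤} ⊆ {x | (2:ℝ≥0∞) ^ (((k:ℤ):ℝ)) ≤ g x} := by
        intro x hx
        simp only [mem_setOf_eq] at hx ⊢
        rw [hx]
        exact le_top
      have hkk : (((k:ℤ):ℝ)) = ((k:ℝ)) := by push_cast; ring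
      calc μ {x | g x = ⊤} * 2 ^ ((k:ℝ))
          ≤ (((2:ℝ≥0∞) ^ (((k:ℤ):ℝ) - 2))⁻¹ *
              (2 ^ ((((k:ℤ):ℝ) - 1) * (1-p)) * A)) * 2 ^ ((k:ℝ)) := by
            refine mul_le_mul_left ((measure_mono h1).trans ((hkey k).trans ?_)) _
            exact mul_le_mul_right (h3 _) _
        _ = 2 ^ (-((((k:ℤ)):ℝ) - 2) + ((((k:ℤ):ℝ) - 1) * (1-p)) + (k:ℝ)) * A := by
            rw [← ENNReal.rpow_neg, tr_add, tr_add]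
            ring
        _ ≤ 2 ^ (1 + p) * A := by
            refine mul_le_mul_left (tr_mono ?_) A
            rw [hkk]
            have hk0 : (0:ℝ) ≤ (k:ℝ) := Nat.cast_nonneg k
            nlinarith
    by_contra hne
    have hRfin : (2:ℝ≥0∞) ^ (1+p) * A ≠ ⊤ := ENNReal.mul_ne_top (tr_ne_top _) hAtop
    have hμfin : μ {x | g x = ⊤} ≠ ⊤ := by
      refine ne_top_of_le_ne_top hRfin ?_
      have := hb 0
      simpa using this
    obtain ⟨m, hm⟩ := ENNReal.exists_nat_gt (ENNReal.div_lt_top hRfin hne).ne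
    have h2m : ((m:ℝ≥0∞)) ≤ 2 ^ ((m:ℝ)) := by
      rw [ENNReal.rpow_natCast]
      calc ((m:ℝ≥0∞)) ≤ ((2^m : ℕ) : ℝ≥0∞) := Nat.cast_le.2 (Nat.lt_two_pow_self (n := m)).le
        _ = 2 ^ m := by push_cast; ring
    have hlt : 2 ^ (1+p) * A < μ {x | g x = ⊤} * 2 ^ ((m:ℝ)) := by
      have hd : 2 ^ (1+p) * A < (m:ℝ≥0∞) * μ {x | g x = ⊤} :=
        (ENNReal.div_lt_iff (Or.inl hne) (Or.inl hμfin)).1 hm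
      calc 2 ^ (1+p) * A < (m:ℝ≥0∞) * μ {x | g x = ⊤} := hd
        _ ≤ 2 ^ ((m:ℝ)) * μ {x | g x = ⊤} := mul_le_mul_left h2m _
        _ = μ {x | g x = ⊤} * 2 ^ ((m:ℝ)) := mul_comm _ _
    exact absurd (hb m) (not_le_of_gt hlt)
  -- dyadic decomposition
  set S : ℤ → Set X := fun n => {x | (2:ℝ≥0∞) ^ ((n:ℝ)) ≤ g x ∧ g x < 2 ^ ((n:ℝ) + 1)}
    with hS
  have hSm : ∀ n : ℤ, MeasurableSet (S n) := by
    intro n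
    have : S n = g ⁻¹' (Ico ((2:ℝ≥0∞) ^ ((n:ℝ))) (2 ^ ((n:ℝ) + 1))) := rfl
    rw [this]
    exact hmg measurableSet_Ico
  have hae : ∀ᵐ x ∂μ, g x ^ p ≤
      ∑' n : ℤ, (S n).indicator (fun _ => ((2:ℝ≥0∞) ^ ((n:ℝ) + 1)) ^ p) x := by
    have hgae : ∀ᵐ x ∂μ, g x ≠ ⊤ := by
      rw [ae_iff]
      simpa [not_not] using htop
    filter_upwards [hgae] with x hx
    rcases eq_or_ne (g x) 0 with hg0 | hg0
    · rw [hg0, ENNReal.zero_rpow_of_pos hp0]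
      exact zero_le
    obtain ⟨n, hnl, hnr⟩ := ENNReal.exists_mem_Ico_zpow hg0 hx (by norm_num) (ENNReal.ofNat_ne_top (n := 2))
    have hxn : x ∈ S n := by
      constructor
      · rw [show ((2:ℝ≥0∞) ^ ((n:ℝ))) = 2 ^ n from ENNReal.rpow_intCast 2 n]
        exact hnl
      · rw [show ((2:ℝ≥0∞) ^ ((n:ℝ) + 1)) = 2 ^ (n + 1 : ℤ) by
          rw [← ENNReal.rpow_intCast 2 (n+1)]; push_cast; ring_nf]
        exact hnr
    calc g x ^ p ≤ ((2:ℝ≥0∞) ^ ((n:ℝ) + 1)) ^ p := by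
          refine ENNReal.rpow_le_rpow ?_ hp0.le
          rw [show ((2:ℝ≥0∞) ^ ((n:ℝ) + 1)) = 2 ^ (n + 1 : ℤ) by
            rw [← ENNReal.rpow_intCast 2 (n+1)]; push_cast; ring_nf]
          exact hnr.le
      _ = (S n).indicator (fun _ => ((2:ℝ≥0∞) ^ ((n:ℝ) + 1)) ^ p) x :=
          (indicator_of_mem hxn (fun _ => ((2:ℝ≥0∞) ^ ((n:ℝ) + 1)) ^ p)).symm
      _ ≤ _ := ENNReal.le_tsum n
  -- main chain
  calc ∫⁻ x, g x ^ p ∂μ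
      ≤ ∫⁻ x, ∑' n : ℤ, (S n).indicator (fun _ => ((2:ℝ≥0∞) ^ ((n:ℝ) + 1)) ^ p) x ∂μ :=
        lintegral_mono_ae hae
    _ = ∑' n : ℤ, ∫⁻ x, (S n).indicator (fun _ => ((2:ℝ≥0∞) ^ ((n:ℝ) + 1)) ^ p) x ∂μ :=
        lintegral_tsum fun n => (measurable_const.indicator (hSm n)).aemeasurable
    _ = ∑' n : ℤ, ((2:ℝ≥0∞) ^ ((n:ℝ) + 1)) ^ p * μ (S n) := by
        congr 1
        funext n
        rw [lintegral_indicator (hSm n), setLIntegral_const]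
    _ ≤ ∑' n : ℤ, ∫⁻ y, ((2:ℝ≥0∞) ^ ((n:ℝ) + 1)) ^ p * (((2:ℝ≥0∞) ^ ((n:ℝ) - 2))⁻¹ *
          trunc ((2:ℝ≥0∞) ^ ((n:ℝ) - 1)) y) ∂μ := by
        refine ENNReal.tsum_le_tsum fun n => ?_
        have hcoefne : ((2:ℝ≥0∞) ^ ((n:ℝ) + 1)) ^ p * ((2:ℝ≥0∞) ^ ((n:ℝ) - 2))⁻¹ ≠ ⊤ := by
          refine ENNReal.mul_ne_top ?_ (ENNReal.inv_ne_top.2 (tr_ne_zero _))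
          rw [← ENNReal.rpow_mul]
          exact tr_ne_top _
        calc ((2:ℝ≥0∞) ^ ((n:ℝ) + 1)) ^ p * μ (S n)
            ≤ ((2:ℝ≥0∞) ^ ((n:ℝ) + 1)) ^ p * (((2:ℝ≥0∞) ^ ((n:ℝ) - 2))⁻¹ *
                ∫⁻ y, trunc ((2:ℝ≥0∞) ^ ((n:ℝ) - 1)) y ∂μ) := by
              refine mul_le_mul_right ((measure_mono fun x hx => hx.1).trans (hkey n)) _
          _ = ∫⁻ y, (((2:ℝ≥0∞) ^ ((n:ℝ) + 1)) ^ p * ((2:ℝ≥0∞) ^ ((n:ℝ) - 2))⁻¹) *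
                trunc ((2:ℝ≥0∞) ^ ((n:ℝ) - 1)) y ∂μ := by
              rw [lintegral_const_mul' _ _ hcoefne, mul_assoc]
          _ = _ := by
              congr 1
              funext y
              ring
    _ ≤ ∫⁻ y, ∑' n : ℤ, ((2:ℝ≥0∞) ^ ((n:ℝ) + 1)) ^ p * (((2:ℝ≥0∞) ^ ((n:ℝ) - 2))⁻¹ *
          trunc ((2:ℝ≥0∞) ^ ((n:ℝ) - 1)) y) ∂μ := tsum_lintegral_le μ _
    _ ≤ ∫⁻ y, K * h y ^ p ∂μ := by
        refine lintegral_mono fun y => ?_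
        have := geom_sum_bound hp (h y) (hfin y)
        calc ∑' n : ℤ, ((2:ℝ≥0∞) ^ ((n:ℝ) + 1)) ^ p * (((2:ℝ≥0∞) ^ ((n:ℝ) - 2))⁻¹ *
              trunc ((2:ℝ≥0∞) ^ ((n:ℝ) - 1)) y)
            = ∑' n : ℤ, ((2:ℝ≥0∞) ^ ((n:ℝ) + 1)) ^ p * ((2:ℝ≥0∞) ^ ((n:ℝ) - 2))⁻¹ *
              (if (2:ℝ≥0∞) ^ ((n:ℝ) - 1) < h y then h y else 0) := by
              congr 1
              funext n
              rw [mul_assoc]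
          _ ≤ (1 - (2:ℝ≥0∞) ^ (1 - p))⁻¹ * (2:ℝ≥0∞) ^ (2 * p + 1) * h y ^ p := this
          _ = K * h y ^ p := rfl
    _ = K * A := lintegral_const_mul' K _ hKnetop

end LpMain

/-- The non-centered maximal operator `M_{(ρ)} f(x) = sup_{B ∋ x} μ(ρB)⁻¹ ∫_B |f| dμ`. -/
noncomputable def Mrho {X : Type*} [MetricSpace X] [MeasurableSpace X]
    (μ : Measure X) (ρ : ℝ) (f : X → ℝ) (x : X) : ℝ≥0∞ :=
  ⨆ (c : X) (r : ℝ) (_ : 0 < r) (_ : x ∈ ball c r),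
    (μ (ball c (ρ * r)))⁻¹ * ∫⁻ y in ball c r, ENNReal.ofReal |f y| ∂μ

lemma Mrho_eq {X : Type*} [MetricSpace X] [MeasurableSpace X] (μ : Measure X) (ρ : ℝ)
    (f : X → ℝ) : Mrho μ ρ f = NM μ ρ (fun y => ENNReal.ofReal |f y|) := rfl

/-- On a geometrically doubling metric measure space, for `ρ ≥ 5`, the maximal operator
`M_{(ρ)}` is bounded on `L^p(μ)` for `1 < p ≤ ∞` and is of weak type `(1,1)`. -/
theorem Mrho_bounded
    {X : Type*} [MetricSpace X] [MeasurableSpace X] [BorelSpace X] (μ : Measure X)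
    (N₀ : ℕ) (hgeom : ∀ (x : X) (r : ℝ), ∃ s : Finset X,
      s.card ≤ N₀ ∧ ball x r ⊆ ⋃ y ∈ s, ball y (r / 2))
    (ρ : ℝ) (hρ : 5 ≤ ρ) :
    (∀ p : ℝ, 1 < p → ∃ C : ℝ≥0∞, C < ⊤ ∧ ∀ f : X → ℝ,
        (∫⁻ x, Mrho μ ρ f x ^ p ∂μ) ^ (1 / p) ≤
          C * (∫⁻ x, ENNReal.ofReal |f x| ^ p ∂μ) ^ (1 / p)) ∧
    (∃ C : ℝ≥0∞, C < ⊤ ∧ ∀ f : X → ℝ, ∀ᵐ x ∂μ,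
        Mrho μ ρ f x ≤ C * essSup (fun y => ENNReal.ofReal |f y|) μ) ∧
    (∃ C : ℝ≥0∞, C < ⊤ ∧ ∀ f : X → ℝ, ∀ t : ℝ, 0 < t →
        ENNReal.ofReal t * μ {x | ENNReal.ofReal t < Mrho μ ρ f x} ≤
          C * ∫⁻ x, ENNReal.ofReal |f x| ∂μ) := by
  haveI : TopologicalSpace.SeparableSpace X := separable_of_geom N₀ hgeom
  have hρ1 : (1:ℝ) ≤ ρ := by linarith
  refine ⟨?_, ⟨1, ENNReal.one_lt_top, fun f => ?_⟩, ⟨1, ENNReal.one_lt_top, fun f t ht => ?_⟩⟩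
  · intro p hp
    set K : ℝ≥0∞ := (1 - (2:ℝ≥0∞) ^ (1 - p))⁻¹ * (2:ℝ≥0∞) ^ (2 * p + 1) with hK
    have hq1 : (2:ℝ≥0∞) ^ (1 - p) < 1 := by
      have h1 : (2:ℝ≥0∞) ^ (1 - p) < 2 ^ (0:ℝ) := tr_lt (by linarith)
      rwa [ENNReal.rpow_zero] at h1
    have hqne : (1:ℝ≥0∞) - 2 ^ (1 - p) ≠ 0 := by
      rw [Ne, tsub_eq_zero_iff_le]
      exact not_le_of_gt hq1
    have hKnetop : K ≠ ⊤ :=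
      ENNReal.mul_ne_top (ENNReal.inv_ne_top.2 hqne) (tr_ne_top _)
    refine ⟨K ^ (1/p), ?_, fun f => ?_⟩
    · exact ENNReal.rpow_lt_top_of_nonneg (by positivity) hKnetop
    · rw [Mrho_eq]
      calc (∫⁻ x, NM μ ρ (fun y => ENNReal.ofReal |f y|) x ^ p ∂μ) ^ (1/p)
          ≤ (K * ∫⁻ x, ENNReal.ofReal |f x| ^ p ∂μ) ^ (1/p) :=
            ENNReal.rpow_le_rpow
              (lp_NM hρ hp _ (fun y => ENNReal.ofReal_ne_top)) (by positivity)
        _ = K ^ (1/p) * (∫⁻ x, ENNReal.ofReal |f x| ^ p ∂μ) ^ (1/p) :=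
            ENNReal.mul_rpow_of_nonneg _ _ (by positivity)
  · refine ae_of_all μ fun x => ?_
    rw [one_mul, Mrho_eq]
    exact NM_le_essSup hρ1 x
  · rw [one_mul, Mrho_eq]
    exact weak_NM hρ (ENNReal.ofReal t)
end
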